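/- arXiv:2510.04473 — 2 statements merged into one kernel-verified Lean document; each statement's English description precedes it below -/
import Mathlib

section
/- Let f : EuclideanSpace ℝ (Fin n) → ℝ be twice continuously differentiable with Hessian ∇²f Lipschitz continuous in operator norm with constant L_H. Let x ∈ EuclideanSpace ℝ (Fin n), Δ > 0, κ > 0, and let m be a quadratic model about x, m(y) = c + ⟨g, y − x⟩ + (1/2)·⟨y − x, H·(y − x)⟩ with H symmetric. If |m(y) − f(x) − ⟨∇f(x), y − x⟩ − (1/2)·⟨y − x, ∇²f(x)·(y − x)⟩| ≤ κ·Δ³ for all y in the closed ball B(x,Δ), then m is fully quadratic for f in B(x,Δ) with constants κ_mf = κ + L_H/6, κ_mg = 34κ + L_H/2, and κ_mh = 24κ + L_H. -/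
open scoped RealInnerProductSpace
open Metric

noncomputable section

/-- Matrix–vector multiplication as a map on Euclidean space. -/
def mulVecE {n : ℕ} (H : Matrix (Fin n) (Fin n) ℝ) (v : EuclideanSpace ℝ (Fin n)) :
    EuclideanSpace ℝ (Fin n) :=
  (EuclideanSpace.equiv (Fin n) ℝ).symm (H.mulVec (EuclideanSpace.equiv (Fin n) ℝ v))

/-- Operator 2-norm of a matrix (the norm induced by the Euclidean vector norm). -/
def opNorm {n : ℕ} (H : Matrix (Fin n) (Fin n) ℝ) : ℝ :=
  sSup {r : ℝ | ∃ v : EuclideanSpace ℝ (Fin n), ‖v‖ ≤ 1 ∧ r = ‖mulVecE H v‖}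

/-- Quadratic model about `x` with data `(c, g, H)`. -/
def qm {n : ℕ} (x : EuclideanSpace ℝ (Fin n)) (c : ℝ) (g : EuclideanSpace ℝ (Fin n))
    (H : Matrix (Fin n) (Fin n) ℝ) (y : EuclideanSpace ℝ (Fin n)) : ℝ :=
  c + ⟪g, y - x⟫ + (1 / 2) * ⟪y - x, mulVecE H (y - x)⟫

/-- `m` is a fully linear model for `f` on the closed ball `B(x, Δ)`. -/
def IsFullyLinear {n : ℕ} (f m : EuclideanSpace ℝ (Fin n) → ℝ)
    (x : EuclideanSpace ℝ (Fin n)) (Δ κmf κmg : ℝ) : Prop :=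
  ∀ y ∈ closedBall x Δ,
    |m y - f y| ≤ κmf * Δ ^ 2 ∧ ‖gradient m y - gradient f y‖ ≤ κmg * Δ

/-- `m` is a fully quadratic model for `f` on the closed ball `B(x, Δ)`. -/
def IsFullyQuadratic {n : ℕ} (f m : EuclideanSpace ℝ (Fin n) → ℝ)
    (x : EuclideanSpace ℝ (Fin n)) (Δ κmf κmg κmh : ℝ) : Prop :=
  ∀ y ∈ closedBall x Δ,
    |m y - f y| ≤ κmf * Δ ^ 3 ∧ ‖gradient m y - gradient f y‖ ≤ κmg * Δ ^ 2 ∧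
      ‖fderiv ℝ (gradient m) y - fderiv ℝ (gradient f) y‖ ≤ κmh * Δ

/-- Smallest eigenvalue of a symmetric matrix: the minimum of `⟪u, H u⟫` over unit vectors. -/
def lambdaMin {n : ℕ} (H : Matrix (Fin n) (Fin n) ℝ) : ℝ :=
  sInf {r : ℝ | ∃ u : EuclideanSpace ℝ (Fin n), ‖u‖ = 1 ∧ r = ⟪u, mulVecE H u⟫}

/-- `τ(H) = max(-λ_min(H), 0)`. -/
def tau {n : ℕ} (H : Matrix (Fin n) (Fin n) ℝ) : ℝ := max (-lambdaMin H) 0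

/-- Hessian matrix of `f` at `x`. -/
def hessMat {n : ℕ} (f : EuclideanSpace ℝ (Fin n) → ℝ) (x : EuclideanSpace ℝ (Fin n)) :
    Matrix (Fin n) (Fin n) ℝ :=
  Matrix.of fun i j => fderiv ℝ (gradient f) x (EuclideanSpace.single j 1) i

/-- ℓ∞ operator norm of a matrix: the maximum absolute row sum. -/
def linftyNorm {m k : Type*} [Fintype m] [Fintype k] (A : Matrix m k ℝ) : ℝ :=
  sSup (Set.range fun i => ∑ j, |A i j|)

/-! ### Auxiliary lemmas -/

/-- `mulVecE` as a continuous linear map. -/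
def mulVecCLM {n : ℕ} (H : Matrix (Fin n) (Fin n) ℝ) :
    EuclideanSpace ℝ (Fin n) →L[ℝ] EuclideanSpace ℝ (Fin n) :=
  LinearMap.toContinuousLinearMap <|
    ((EuclideanSpace.equiv (Fin n) ℝ).symm.toLinearEquiv.toLinearMap.comp
      (H.mulVecLin.comp (EuclideanSpace.equiv (Fin n) ℝ).toLinearEquiv.toLinearMap))

lemma mulVecCLM_apply {n : ℕ} (H : Matrix (Fin n) (Fin n) ℝ) (v : EuclideanSpace ℝ (Fin n)) :
    mulVecCLM H v = mulVecE H v := rfl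

lemma inner_mulVecE_symm {n : ℕ} {H : Matrix (Fin n) (Fin n) ℝ} (hH : H.IsSymm)
    (u v : EuclideanSpace ℝ (Fin n)) : ⟪mulVecE H u, v⟫ = ⟪u, mulVecE H v⟫ := by
  simp only [PiLp.inner_apply, RCLike.inner_apply, conj_trivial]
  have h1 : ∀ i, mulVecE H u i = ∑ j, H i j * u j := fun _ => rfl
  have h2 : ∀ i, mulVecE H v i = ∑ j, H i j * v j := fun _ => rfl
  simp only [h1, h2, Finset.sum_mul, Finset.mul_sum]
  rw [Finset.sum_comm]
  exact Finset.sum_congr rfl fun j _ => Finset.sum_congr rfl fun i _ => by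
    rw [hH.apply i j]; ring

lemma hasGradientAt_qm {n : ℕ} (x : EuclideanSpace ℝ (Fin n)) (c : ℝ)
    (g : EuclideanSpace ℝ (Fin n)) {H : Matrix (Fin n) (Fin n) ℝ} (hH : H.IsSymm)
    (y : EuclideanSpace ℝ (Fin n)) :
    HasGradientAt (qm x c g H) (g + mulVecE H (y - x)) y := by
  rw [hasGradientAt_iff_hasFDerivAt]
  have h1 : HasFDerivAt (fun y : EuclideanSpace ℝ (Fin n) => y - x)
      (ContinuousLinearMap.id ℝ _) y := (hasFDerivAt_id y).sub_const x
  have h2 : HasFDerivAt (fun y : EuclideanSpace ℝ (Fin n) => mulVecE H (y - x))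
      (mulVecCLM H) y := by
    have := (mulVecCLM H).hasFDerivAt.comp y h1
    exact this
  have hi1 := (hasFDerivAt_const g y).inner ℝ h1
  have hi2 := h1.inner ℝ h2
  have := ((hasFDerivAt_const c y).add hi1).add (hi2.const_mul (1/2 : ℝ))
  refine HasFDerivAt.congr_fderiv (this.congr_fderiv ?_) rfl
  ext v
  simp [fderivInnerCLM_apply, mulVecCLM_apply, InnerProductSpace.toDual_apply_apply]
  have e1 : ∑ i, (y i - x i) * mulVecE H v i = ⟪mulVecE H (y-x), v⟫ := by
    rw [inner_mulVecE_symm hH]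
    simp [PiLp.inner_apply, RCLike.inner_apply, PiLp.sub_apply]
    exact Finset.sum_congr rfl fun i _ => mul_comm _ _
  have e2 : ∑ i, v i * mulVecE H (y-x) i = ⟪mulVecE H (y-x), v⟫ := by
    rw [real_inner_comm]
    simp [PiLp.inner_apply, RCLike.inner_apply]
    exact Finset.sum_congr rfl fun i _ => mul_comm _ _
  have e3 : ∑ i, mulVecE H (y-x) i * v i = ⟪mulVecE H (y-x), v⟫ := by
    simp [PiLp.inner_apply, RCLike.inner_apply]
    exact Finset.sum_congr rfl fun i _ => mul_comm _ _
  rw [← real_inner_comm v, ← inner_mulVecE_symm hH]; ring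

lemma curve_hasDerivAt {n : ℕ} (x v : EuclideanSpace ℝ (Fin n)) (t : ℝ) :
    HasDerivAt (fun t : ℝ => x + t • v) v t := by
  simpa using ((hasDerivAt_id t).smul_const v).const_add x

lemma gradient_contDiff {n : ℕ} {f : EuclideanSpace ℝ (Fin n) → ℝ} (hf : ContDiff ℝ 2 f) :
    ContDiff ℝ 1 (gradient f) := by
  have h1 : ContDiff ℝ 1 (fderiv ℝ f) := hf.fderiv_right (by norm_num)
  exact ((InnerProductSpace.toDual ℝ _).symm.contDiff).comp h1

lemma fderiv_eq_inner_gradient {n : ℕ} {f : EuclideanSpace ℝ (Fin n) → ℝ}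
    (y w : EuclideanSpace ℝ (Fin n)) : fderiv ℝ f y w = ⟪gradient f y, w⟫ := by
  rw [gradient, ← InnerProductSpace.toDual_apply_apply, LinearIsometryEquiv.apply_symm_apply]

lemma grad_taylor {n : ℕ} {f : EuclideanSpace ℝ (Fin n) → ℝ} (hf : ContDiff ℝ 2 f) {LH : NNReal}
    (hLip : LipschitzWith LH (fun y => fderiv ℝ (gradient f) y))
    (x v : EuclideanSpace ℝ (Fin n)) :
    ‖gradient f (x + v) - gradient f x - fderiv ℝ (gradient f) x v‖
      ≤ (LH : ℝ) / 2 * ‖v‖ ^ 2 := by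
  set G := gradient f with hG
  have hGdiff : Differentiable ℝ G := (gradient_contDiff hf).differentiable one_ne_zero
  set φ : ℝ → EuclideanSpace ℝ (Fin n) :=
    fun t => G (x + t • v) - t • (fderiv ℝ G x v) - G x with hφ
  have hφ' : ∀ t : ℝ, HasDerivAt φ (fderiv ℝ G (x + t • v) v - fderiv ℝ G x v) t := by
    intro t
    have h1 := (hGdiff (x + t • v)).hasFDerivAt.comp_hasDerivAt t (curve_hasDerivAt x v t)
    have h2 : HasDerivAt (fun t : ℝ => t • (fderiv ℝ G x v)) (fderiv ℝ G x v) t := by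
      simpa using (hasDerivAt_id t).smul_const (fderiv ℝ G x v)
    exact (h1.sub h2).sub_const (G x)
  have key : ∀ t ∈ Set.Icc (0:ℝ) 1, ‖φ t‖ ≤ (LH : ℝ) * ‖v‖ ^ 2 / 2 * t ^ 2 := by
    have hB : ∀ t : ℝ, HasDerivAt (fun t : ℝ => (LH : ℝ) * ‖v‖ ^ 2 / 2 * t ^ 2)
        ((LH : ℝ) * ‖v‖ ^ 2 * t) t := by
      intro t
      have := (hasDerivAt_pow 2 t).const_mul ((LH : ℝ) * ‖v‖ ^ 2 / 2)
      refine this.congr_deriv ?_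
      norm_num
      ring
    refine image_norm_le_of_norm_deriv_right_le_deriv_boundary
      (f := φ) (f' := fun t => (fderiv ℝ G (x + t • v)) v - (fderiv ℝ G x) v) ?_ ?_ ?_ hB ?_
    · exact fun t _ => ((hφ' t).continuousAt).continuousWithinAt
    · exact fun t _ => (hφ' t).hasDerivWithinAt
    · simp [hφ]
    · intro t ht
      have hd : dist (fderiv ℝ G (x + t • v)) (fderiv ℝ G x) ≤ (LH : ℝ) * dist (x + t • v) x :=
        hLip.dist_le_mul _ _
      have hdist : dist (x + t • v) x = t * ‖v‖ := by
        rw [dist_eq_norm]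
        simp [norm_smul, abs_of_nonneg ht.1]
      calc ‖fderiv ℝ G (x + t • v) v - fderiv ℝ G x v‖
          = ‖(fderiv ℝ G (x + t • v) - fderiv ℝ G x) v‖ := by simp
        _ ≤ ‖fderiv ℝ G (x + t • v) - fderiv ℝ G x‖ * ‖v‖ :=
            ContinuousLinearMap.le_opNorm _ _
        _ ≤ ((LH : ℝ) * (t * ‖v‖)) * ‖v‖ := by
            have : ‖fderiv ℝ G (x + t • v) - fderiv ℝ G x‖ ≤ (LH : ℝ) * (t * ‖v‖) := by
              rw [← dist_eq_norm]; rw [hdist] at hd; exact hd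
            exact mul_le_mul_of_nonneg_right this (norm_nonneg v)
        _ = (LH : ℝ) * ‖v‖ ^ 2 * t := by ring
  have h1 := key 1 (by norm_num)
  have h2 : gradient f (x + v) - gradient f x - fderiv ℝ (gradient f) x v = φ 1 := by
    simp only [hφ, one_smul]
    abel
  rw [h2]
  calc ‖φ 1‖ ≤ (LH : ℝ) * ‖v‖ ^ 2 / 2 * 1 ^ 2 := h1
    _ = (LH : ℝ) / 2 * ‖v‖ ^ 2 := by ring

lemma val_taylor {n : ℕ} {f : EuclideanSpace ℝ (Fin n) → ℝ} (hf : ContDiff ℝ 2 f) {LH : NNReal}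
    (hLip : LipschitzWith LH (fun y => fderiv ℝ (gradient f) y))
    (x v : EuclideanSpace ℝ (Fin n)) :
    |f (x + v) - f x - ⟪gradient f x, v⟫ - (1 / 2) * ⟪v, fderiv ℝ (gradient f) x v⟫|
      ≤ (LH : ℝ) / 6 * ‖v‖ ^ 3 := by
  set G := gradient f with hG
  have hdf : Differentiable ℝ f := hf.differentiable two_ne_zero
  set ψ : ℝ → ℝ := fun t =>
    f (x + t • v) - t * ⟪G x, v⟫ - t ^ 2 / 2 * ⟪v, (fderiv ℝ G x) v⟫ - f x with hψ
  have hψ' : ∀ t : ℝ, HasDerivAt ψ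
      (⟪G (x + t • v), v⟫ - ⟪G x, v⟫ - t * ⟪v, (fderiv ℝ G x) v⟫) t := by
    intro t
    have h1 : HasDerivAt (fun t : ℝ => f (x + t • v)) (⟪G (x + t • v), v⟫) t := by
      have := (hdf (x + t • v)).hasFDerivAt.comp_hasDerivAt t (curve_hasDerivAt x v t)
      rwa [fderiv_eq_inner_gradient] at this
    have h2 : HasDerivAt (fun t : ℝ => t * ⟪G x, v⟫) (⟪G x, v⟫) t := by
      simpa using (hasDerivAt_id t).mul_const (⟪G x, v⟫)
    have h3 : HasDerivAt (fun t : ℝ => t ^ 2 / 2 * ⟪v, (fderiv ℝ G x) v⟫)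
        (t * ⟪v, (fderiv ℝ G x) v⟫) t := by
      have := ((hasDerivAt_pow 2 t).div_const 2).mul_const (⟪v, (fderiv ℝ G x) v⟫)
      refine this.congr_deriv ?_
      norm_num
      try ring
    exact ((h1.sub h2).sub h3).sub_const (f x)
  have key : ∀ t ∈ Set.Icc (0:ℝ) 1, ‖ψ t‖ ≤ (LH : ℝ) * ‖v‖ ^ 3 / 6 * t ^ 3 := by
    have hB : ∀ t : ℝ, HasDerivAt (fun t : ℝ => (LH : ℝ) * ‖v‖ ^ 3 / 6 * t ^ 3)
        ((LH : ℝ) * ‖v‖ ^ 3 / 2 * t ^ 2) t := by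
      intro t
      have := (hasDerivAt_pow 3 t).const_mul ((LH : ℝ) * ‖v‖ ^ 3 / 6)
      refine this.congr_deriv ?_
      norm_num
      try ring
    refine image_norm_le_of_norm_deriv_right_le_deriv_boundary
      (f := ψ) (f' := fun t => ⟪G (x + t • v), v⟫ - ⟪G x, v⟫ - t * ⟪v, (fderiv ℝ G x) v⟫)
      ?_ ?_ ?_ hB ?_
    · exact fun t _ => ((hψ' t).continuousAt).continuousWithinAt
    · exact fun t _ => (hψ' t).hasDerivWithinAt
    · simp [hψ]
    · intro t ht
      have heq : ⟪G (x + t • v), v⟫ - ⟪G x, v⟫ - t * ⟪v, (fderiv ℝ G x) v⟫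
          = ⟪G (x + t • v) - G x - fderiv ℝ G x (t • v), v⟫ := by
        rw [inner_sub_left, inner_sub_left, map_smul, real_inner_smul_left,
          real_inner_comm v ((fderiv ℝ G x) v)]
      show ‖⟪G (x + t • v), v⟫ - ⟪G x, v⟫ - t * ⟪v, (fderiv ℝ G x) v⟫‖ ≤ _
      rw [Real.norm_eq_abs, heq]
      calc |⟪G (x + t • v) - G x - fderiv ℝ G x (t • v), v⟫|
          ≤ ‖G (x + t • v) - G x - fderiv ℝ G x (t • v)‖ * ‖v‖ := abs_real_inner_le_norm _ _
        _ ≤ ((LH : ℝ) / 2 * ‖t • v‖ ^ 2) * ‖v‖ :=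
            mul_le_mul_of_nonneg_right (grad_taylor hf hLip x (t • v)) (norm_nonneg v)
        _ ≤ (LH : ℝ) * ‖v‖ ^ 3 / 2 * t ^ 2 := by
            rw [norm_smul, Real.norm_eq_abs, abs_of_nonneg ht.1]
            ring_nf
            exact le_refl _
  have h1 := key 1 (by norm_num)
  have h2 : f (x + v) - f x - ⟪G x, v⟫ - (1 / 2) * ⟪v, (fderiv ℝ G x) v⟫ = ψ 1 := by
    simp only [hψ, one_smul, one_pow, one_mul]
    ring
  rw [hG] at h2 ⊢
  rw [h2]
  calc ‖ψ 1‖ ≤ (LH : ℝ) * ‖v‖ ^ 3 / 6 * 1 ^ 3 := h1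
    _ = (LH : ℝ) / 6 * ‖v‖ ^ 3 := by ring

lemma hess_symm {n : ℕ} {f : EuclideanSpace ℝ (Fin n) → ℝ} (hf : ContDiff ℝ 2 f)
    (x u v : EuclideanSpace ℝ (Fin n)) :
    ⟪fderiv ℝ (gradient f) x u, v⟫ = ⟪fderiv ℝ (gradient f) x v, u⟫ := by
  have hdf : Differentiable ℝ f := hf.differentiable two_ne_zero
  have h1 : ContDiff ℝ 1 (fderiv ℝ f) := hf.fderiv_right (by norm_num)
  have hd2 : DifferentiableAt ℝ (fderiv ℝ f) x := (h1.differentiable one_ne_zero) x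
  set f'' := fderiv ℝ (fderiv ℝ f) x with hf''
  have hsym : ∀ a b, f'' a b = f'' b a := fun a b =>
    second_derivative_symmetric (fun y => (hdf y).hasFDerivAt) hd2.hasFDerivAt a b
  set e := (InnerProductSpace.toDual ℝ (EuclideanSpace ℝ (Fin n))).symm
  have hGfd : HasFDerivAt (gradient f)
      ((e.toContinuousLinearEquiv : _ ≃L[ℝ] _).toContinuousLinearMap.comp f'') x := by
    have : HasFDerivAt (⇑e ∘ fderiv ℝ f)
        ((e.toContinuousLinearEquiv : _ ≃L[ℝ] _).toContinuousLinearMap.comp f'') x :=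
      (e.toContinuousLinearEquiv.hasFDerivAt).comp x hd2.hasFDerivAt
    exact this
  have hfd : fderiv ℝ (gradient f) x
      = (e.toContinuousLinearEquiv : _ ≃L[ℝ] _).toContinuousLinearMap.comp f'' := hGfd.fderiv
  rw [hfd]
  have key : ∀ a b : EuclideanSpace ℝ (Fin n),
      ⟪((e.toContinuousLinearEquiv : _ ≃L[ℝ] _).toContinuousLinearMap.comp f'') a, b⟫
        = f'' a b := by
    intro a b
    show ⟪e (f'' a), b⟫ = f'' a b
    rw [← InnerProductSpace.toDual_apply_apply, LinearIsometryEquiv.apply_symm_apply]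
  rw [key, key, hsym]

set_option maxHeartbeats 1600000 in
/-- A quadratic model whose values are within `κ·Δ³` of the second-order Taylor series of `f`
on `B(x,Δ)` is fully quadratic with constants `κ_mf = κ + L_H/6`, `κ_mg = 34κ + L_H/2`,
`κ_mh = 24κ + L_H`. -/
theorem fully_quadratic_of_taylor_accuracy {n : ℕ}
    (f : EuclideanSpace ℝ (Fin n) → ℝ) (hf : ContDiff ℝ 2 f)
    (LH : NNReal) (hLip : LipschitzWith LH (fun y => fderiv ℝ (gradient f) y))
    (x : EuclideanSpace ℝ (Fin n)) (Δ : ℝ) (hΔ : 0 < Δ) (κ : ℝ) (hκ : 0 < κ)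
    (c : ℝ) (g : EuclideanSpace ℝ (Fin n)) (H : Matrix (Fin n) (Fin n) ℝ)
    (hHsymm : H.IsSymm)
    (m : EuclideanSpace ℝ (Fin n) → ℝ) (hm : ∀ y, m y = qm x c g H y)
    (happrox : ∀ y ∈ closedBall x Δ,
      |m y - f x - ⟪gradient f x, y - x⟫ -
        (1 / 2) * ⟪y - x, fderiv ℝ (gradient f) x (y - x)⟫| ≤ κ * Δ ^ 3) :
    IsFullyQuadratic f m x Δ (κ + (LH : ℝ) / 6) (34 * κ + (LH : ℝ) / 2)
      (24 * κ + (LH : ℝ)) := by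
  have hmq : m = qm x c g H := funext hm
  subst hmq
  have hGdiff : Differentiable ℝ (gradient f) := (gradient_contDiff hf).differentiable one_ne_zero
  set A := mulVecCLM H with hA
  set Hx := fderiv ℝ (gradient f) x with hHx
  set T := A - Hx with hT
  have hTsymm : ∀ u v, ⟪T u, v⟫ = ⟪T v, u⟫ := by
    intro u v
    simp only [hT, ContinuousLinearMap.sub_apply, inner_sub_left]
    rw [mulVecCLM_apply, mulVecCLM_apply, inner_mulVecE_symm hHsymm u v,
      real_inner_comm u (mulVecE H v), hHx, hess_symm hf x u v]
  -- Taylor error of the model coefficients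
  have hq : ∀ s : EuclideanSpace ℝ (Fin n), ‖s‖ ≤ Δ →
      |(c - f x) + ⟪g - gradient f x, s⟫ + (1/2) * ⟪s, T s⟫| ≤ κ * Δ ^ 3 := by
    intro s hs
    have hy : x + s ∈ closedBall x Δ := by
      rw [mem_closedBall_iff_norm]; simpa using hs
    have h := happrox (x + s) hy
    have hxs : x + s - x = s := by abel
    rw [hxs] at h
    have heq : (c - f x) + ⟪g - gradient f x, s⟫ + (1/2) * ⟪s, T s⟫
        = qm x c g H (x + s) - f x - ⟪gradient f x, s⟫ - (1/2) * ⟪s, Hx s⟫ := by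
      simp only [qm, hxs, hT, hA, ContinuousLinearMap.sub_apply, inner_sub_right, inner_sub_left,
        mulVecCLM_apply]
      ring
    rw [heq]
    exact h
  have h0 : |c - f x| ≤ κ * Δ ^ 3 := by
    have := hq 0 (by simp [hΔ.le])
    simpa using this
  have heg : ∀ s : EuclideanSpace ℝ (Fin n), ‖s‖ ≤ Δ →
      |⟪g - gradient f x, s⟫| ≤ κ * Δ ^ 3 := by
    intro s hs
    have h1 := hq s hs
    have h2 := hq (-s) (by rwa [norm_neg])
    have hrw : (c - f x) + ⟪g - gradient f x, -s⟫ + (1/2) * ⟪-s, T (-s)⟫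
        = (c - f x) - ⟪g - gradient f x, s⟫ + (1/2) * ⟪s, T s⟫ := by
      rw [inner_neg_right, map_neg, inner_neg_neg]
      ring
    rw [hrw] at h2
    rw [abs_le] at h1 h2 ⊢
    constructor <;> linarith [h1.1, h1.2, h2.1, h2.2]
  have hegnorm : ‖g - gradient f x‖ ≤ κ * Δ ^ 2 := by
    rcases eq_or_ne (g - gradient f x) 0 with h | h
    · rw [h, norm_zero]; positivity
    · set w := g - gradient f x
      have hpos : 0 < ‖w‖ := norm_pos_iff.mpr h
      have hsn : ‖(Δ / ‖w‖) • w‖ = Δ := by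
        rw [norm_smul, Real.norm_eq_abs, abs_of_pos (by positivity),
          div_mul_cancel₀ _ (ne_of_gt hpos)]
      have h1 := heg ((Δ / ‖w‖) • w) (le_of_eq hsn)
      rw [real_inner_smul_right, real_inner_self_eq_norm_sq] at h1
      rw [abs_of_nonneg (by positivity)] at h1
      have hΔw : Δ / ‖w‖ * ‖w‖ ^ 2 = Δ * ‖w‖ := by
        field_simp
      rw [hΔw] at h1
      nlinarith
  have hQ : ∀ w : EuclideanSpace ℝ (Fin n), |⟪w, T w⟫| ≤ 4 * κ * Δ * ‖w‖ ^ 2 := by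
    intro w
    rcases eq_or_ne w 0 with h | h
    · simp [h]
    · have hpos : 0 < ‖w‖ := norm_pos_iff.mpr h
      set s := (Δ / ‖w‖) • w with hsdef
      have hsn : ‖s‖ = Δ := by
        rw [hsdef, norm_smul, Real.norm_eq_abs, abs_of_pos (by positivity),
          div_mul_cancel₀ _ (ne_of_gt hpos)]
      have h1 := hq s (le_of_eq hsn)
      have h2 := hq (-s) (by rw [norm_neg]; exact le_of_eq hsn)
      have hrw : (c - f x) + ⟪g - gradient f x, -s⟫ + (1/2) * ⟪-s, T (-s)⟫
          = (c - f x) - ⟪g - gradient f x, s⟫ + (1/2) * ⟪s, T s⟫ := by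
        rw [inner_neg_right, map_neg, inner_neg_neg]
        ring
      rw [hrw] at h2
      have hz : |⟪s, T s⟫| ≤ 4 * (κ * Δ ^ 3) := by
        rw [abs_le] at h0 h1 h2 ⊢
        constructor <;> linarith [h1.1, h1.2, h2.1, h2.2, h0.1, h0.2]
      have hsc : ⟪s, T s⟫ = (Δ / ‖w‖) ^ 2 * ⟪w, T w⟫ := by
        rw [hsdef, map_smul, real_inner_smul_left, real_inner_smul_right]
        ring
      rw [hsc, abs_mul, abs_of_pos (by positivity : (0:ℝ) < (Δ / ‖w‖) ^ 2)] at hz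
      have hdd : (Δ / ‖w‖) ^ 2 = Δ ^ 2 / ‖w‖ ^ 2 := by rw [div_pow]
      rw [hdd] at hz
      have hw2 : 0 < ‖w‖ ^ 2 := by positivity
      have hz2 : Δ ^ 2 * |⟪w, T w⟫| ≤ 4 * (κ * Δ ^ 3) * ‖w‖ ^ 2 := by
        have := (div_mul_eq_mul_div (Δ ^ 2) (‖w‖ ^ 2) (|⟪w, T w⟫|)) ▸ hz
        rw [div_le_iff₀ hw2] at this
        exact this
      have hΔ2 : (0:ℝ) < Δ ^ 2 := by positivity
      rw [← mul_le_mul_iff_right₀ hΔ2]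
      calc Δ ^ 2 * |⟪w, T w⟫| ≤ 4 * (κ * Δ ^ 3) * ‖w‖ ^ 2 := hz2
        _ = Δ ^ 2 * (4 * κ * Δ * ‖w‖ ^ 2) := by ring
  have hTv : ∀ u : EuclideanSpace ℝ (Fin n), ‖T u‖ ≤ 4 * κ * Δ * ‖u‖ := by
    have hpol : ∀ u v : EuclideanSpace ℝ (Fin n),
        |⟪T u, v⟫| ≤ 2 * κ * Δ * (‖u‖ ^ 2 + ‖v‖ ^ 2) := by
      intro u v
      have h1 := hQ (u + v)
      have h2 := hQ (u - v)
      have hexp : ⟪u + v, T (u + v)⟫ - ⟪u - v, T (u - v)⟫ = 4 * ⟪T u, v⟫ := by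
        simp only [map_add, map_sub, inner_add_left, inner_add_right, inner_sub_left,
          inner_sub_right]
        have c1 : ⟪v, T u⟫ = ⟪T u, v⟫ := real_inner_comm _ _
        have c2 : ⟪u, T v⟫ = ⟪T u, v⟫ := by rw [real_inner_comm]; exact hTsymm v u
        rw [c1, c2]
        ring
      have hpar : ‖u + v‖ ^ 2 + ‖u - v‖ ^ 2 = 2 * (‖u‖ ^ 2 + ‖v‖ ^ 2) := by
        rw [norm_add_sq_real, norm_sub_sq_real]
        ring
      have h3 : |4 * ⟪T u, v⟫| ≤ 4 * κ * Δ * ‖u + v‖ ^ 2 + 4 * κ * Δ * ‖u - v‖ ^ 2 := by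
        rw [← hexp]
        exact (abs_sub _ _).trans (add_le_add h1 h2)
      have h4 : 4 * κ * Δ * ‖u + v‖ ^ 2 + 4 * κ * Δ * ‖u - v‖ ^ 2
          = 8 * κ * Δ * (‖u‖ ^ 2 + ‖v‖ ^ 2) := by
        calc 4 * κ * Δ * ‖u + v‖ ^ 2 + 4 * κ * Δ * ‖u - v‖ ^ 2
            = 4 * κ * Δ * (‖u + v‖ ^ 2 + ‖u - v‖ ^ 2) := by ring
          _ = 4 * κ * Δ * (2 * (‖u‖ ^ 2 + ‖v‖ ^ 2)) := by rw [hpar]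
          _ = 8 * κ * Δ * (‖u‖ ^ 2 + ‖v‖ ^ 2) := by ring
      rw [h4, abs_mul, abs_of_nonneg (by norm_num : (0:ℝ) ≤ 4)] at h3
      linarith
    intro u
    rcases eq_or_ne (T u) 0 with h | h
    · rw [h, norm_zero]; positivity
    · have hTupos : 0 < ‖T u‖ := norm_pos_iff.mpr h
      have h1 := hpol u ((‖u‖ / ‖T u‖) • T u)
      rw [real_inner_smul_right, real_inner_self_eq_norm_sq] at h1
      have hvn : ‖(‖u‖ / ‖T u‖) • T u‖ = ‖u‖ := by
        rw [norm_smul, Real.norm_eq_abs, abs_of_nonneg (by positivity),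
          div_mul_cancel₀ _ (ne_of_gt hTupos)]
      rw [hvn] at h1
      have he : ‖u‖ / ‖T u‖ * ‖T u‖ ^ 2 = ‖u‖ * ‖T u‖ := by
        field_simp
      rw [he, abs_of_nonneg (by positivity)] at h1
      rcases eq_or_lt_of_le (norm_nonneg u) with hu0 | hu0
      · exfalso
        have : u = 0 := norm_eq_zero.mp hu0.symm
        rw [this, map_zero] at h
        exact h rfl
      · nlinarith
  have hTnorm : ‖T‖ ≤ 4 * κ * Δ := ContinuousLinearMap.opNorm_le_bound T (by positivity) hTv
  -- gradient and Hessian of the model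
  have hgrad_m : gradient (qm x c g H) = fun y => g + mulVecE H (y - x) :=
    funext fun y => (hasGradientAt_qm x c g hHsymm y).gradient
  have hfd_m : ∀ y, fderiv ℝ (gradient (qm x c g H)) y = A := by
    intro y
    rw [hgrad_m]
    have h1 : HasFDerivAt (fun y : EuclideanSpace ℝ (Fin n) => mulVecE H (y - x)) A y := by
      have := A.hasFDerivAt.comp y ((hasFDerivAt_id y).sub_const x)
      exact this
    exact (h1.const_add g).fderiv
  -- main proof
  intro y hy
  have hs : ‖y - x‖ ≤ Δ := mem_closedBall_iff_norm.mp hy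
  have hxy : x + (y - x) = y := by abel
  refine ⟨?_, ?_, ?_⟩
  · -- value bound
    have h1 := happrox y hy
    have h2 := val_taylor hf hLip x (y - x)
    rw [hxy] at h2
    have h3 : ‖y - x‖ ^ 3 ≤ Δ ^ 3 := pow_le_pow_left₀ (norm_nonneg _) hs 3
    have h4 : |f y - f x - ⟪gradient f x, y - x⟫ - (1/2) * ⟪y - x, Hx (y - x)⟫|
        ≤ (LH : ℝ) / 6 * Δ ^ 3 := by
      refine h2.trans ?_
      have : (0:ℝ) ≤ (LH : ℝ) / 6 := by positivity
      exact mul_le_mul_of_nonneg_left h3 this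
    rw [abs_le] at h1 h4 ⊢
    constructor <;> nlinarith [h1.1, h1.2, h4.1, h4.2]
  · -- gradient bound
    have hgy : gradient (qm x c g H) y = g + mulVecE H (y - x) := by rw [hgrad_m]
    have h2 := grad_taylor hf hLip x (y - x)
    rw [hxy] at h2
    have hid : gradient (qm x c g H) y - gradient f y
        = (g - gradient f x) + T (y - x)
          - (gradient f y - gradient f x - Hx (y - x)) := by
      rw [hgy]
      have hAe : mulVecE H (y - x) = A (y - x) := by
        rw [hA]
        exact (mulVecCLM_apply H (y - x)).symm
      rw [hAe]
      simp only [hT, ContinuousLinearMap.sub_apply]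
      abel
    rw [hid]
    have hTb : ‖T (y - x)‖ ≤ 4 * κ * Δ * Δ := by
      refine (hTv (y - x)).trans ?_
      have : (0:ℝ) ≤ 4 * κ * Δ := by positivity
      exact mul_le_mul_of_nonneg_left hs this
    have hsq : ‖y - x‖ ^ 2 ≤ Δ ^ 2 := pow_le_pow_left₀ (norm_nonneg _) hs 2
    have hrb : ‖gradient f y - gradient f x - Hx (y - x)‖ ≤ (LH : ℝ) / 2 * Δ ^ 2 := by
      refine h2.trans ?_
      have : (0:ℝ) ≤ (LH : ℝ) / 2 := by positivity
      exact mul_le_mul_of_nonneg_left hsq this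
    calc ‖(g - gradient f x) + T (y - x)
          - (gradient f y - gradient f x - Hx (y - x))‖
        ≤ ‖(g - gradient f x) + T (y - x)‖
          + ‖gradient f y - gradient f x - Hx (y - x)‖ := norm_sub_le _ _
      _ ≤ ‖g - gradient f x‖ + ‖T (y - x)‖
          + ‖gradient f y - gradient f x - Hx (y - x)‖ := by
          have := norm_add_le (g - gradient f x) (T (y - x))
          linarith
      _ ≤ κ * Δ ^ 2 + 4 * κ * Δ * Δ + (LH : ℝ) / 2 * Δ ^ 2 := by
          linarith [hegnorm, hTb, hrb]
      _ ≤ (34 * κ + (LH : ℝ) / 2) * Δ ^ 2 := by nlinarith [sq_nonneg Δ]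
  · -- Hessian bound
    rw [hfd_m y]
    have hid : A - fderiv ℝ (gradient f) y = T + (Hx - fderiv ℝ (gradient f) y) := by
      rw [hT]
      abel
    rw [hid]
    have hHy : ‖Hx - fderiv ℝ (gradient f) y‖ ≤ (LH : ℝ) * Δ := by
      have hd := hLip.dist_le_mul x y
      rw [dist_eq_norm] at hd
      have : dist x y ≤ Δ := by
        rw [dist_comm, dist_eq_norm]
        exact hs
      calc ‖Hx - fderiv ℝ (gradient f) y‖ ≤ (LH : ℝ) * dist x y := hd
        _ ≤ (LH : ℝ) * Δ := mul_le_mul_of_nonneg_left this (NNReal.coe_nonneg LH)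
    calc ‖T + (Hx - fderiv ℝ (gradient f) y)‖
        ≤ ‖T‖ + ‖Hx - fderiv ℝ (gradient f) y‖ := norm_add_le _ _
      _ ≤ 4 * κ * Δ + (LH : ℝ) * Δ := add_le_add hTnorm hHy
      _ ≤ (24 * κ + (LH : ℝ)) * Δ := by nlinarith
end
end

section
/- Let f : EuclideanSpace ℝ (Fin n) → ℝ be differentiable, bounded below by f_low, with ∇f Lipschitz continuous with constant L_g. Consider iterates of the IBO trust-region algorithm: sequences x_k ∈ EuclideanSpace ℝ (Fin n), Δ_k > 0 with Δ_0 > 0 given, quadratic models m_k about x_k with data (c_k, g_k, H_k), H_k symmetric with ‖H_k‖ ≤ κ_H − 1 for some κ_H ≥ 1, each m_k fully linear for f in B(x_k, Δ_k) with constants κ_mf, κ_mg > 0 independent of k, and steps s_k with ‖s_k‖ ≤ Δ_k and m_k(x_k) − m_k(x_k + s_k) ≥ κ_s·‖g_k‖·min(Δ_k, ‖g_k‖/(‖H_k‖ + 1)) for some κ_s ∈ (0, 1/2); with ρ_k := (f(x_k) − f(x_k + s_k))/(m_k(x_k) − m_k(x_k + s_k)), the updates are: if ρ_k ≥ η_S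 and ‖g_k‖ ≥ μ_c·Δ_k then x_{k+1} = x_k + s_k and Δ_{k+1} = γ_inc·Δ_k; otherwise if ρ_k ≥ η_U and ‖g_k‖ ≥ μ_c·Δ_k then x_{k+1} = x_k + s_k and Δ_{k+1} = Δ_k; otherwise x_{k+1} = x_k and Δ_{k+1} = γ_dec·Δ_k, where 0 < γ_dec < 1 < γ_inc, 0 < η_U ≤ η_S < 1, μ_c > 0. If ε > 0 and ‖∇f(x_k)‖ ≥ ε for all k = 0, …, K−1, then K ≤ log(Δ_0/Δ_min(ε))/log(1/γ_dec) + (1 + log(γ_inc)/log(1/γ_dec))·(1 + κ_mg/μ_c)·(f(x_0) − f_low)/(η_U·κ_s·ε·Δ_min(ε)), where Δ_min(ε) := min(Δ_0, γ_dec·ε/(max(2κ_mf/(κ_s·(1 − η_S)), κ_H, μ_c) + κ_mg), ε/((1 + κ_mg/μ_c)·κ_H)). -/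
open scoped RealInnerProductSpace
open Metric

noncomputable section

set_option maxHeartbeats 1000000
-- auxiliary
theorem opNorm_nonneg' {n : ℕ} (H : Matrix (Fin n) (Fin n) ℝ) : 0 ≤ opNorm H := by
  by_cases hb : BddAbove {r : ℝ | ∃ v : EuclideanSpace ℝ (Fin n), ‖v‖ ≤ 1 ∧ r = ‖mulVecE H v‖}
  · apply le_csSup hb
    exact ⟨0, by simp, by simp [mulVecE]⟩
  · unfold opNorm
    rw [Real.sSup_of_not_bddAbove hb]

def mulVecL {n : ℕ} (H : Matrix (Fin n) (Fin n) ℝ) :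
    EuclideanSpace ℝ (Fin n) →L[ℝ] EuclideanSpace ℝ (Fin n) :=
  LinearMap.toContinuousLinearMap <|
    { toFun := mulVecE H
      map_add' := by intro a b; simp [mulVecE, Matrix.mulVec_add]
      map_smul' := by intro c a; simp [mulVecE, Matrix.mulVec_smul] }

theorem gradient_qm {n : ℕ} (x : EuclideanSpace ℝ (Fin n)) (c : ℝ)
    (g : EuclideanSpace ℝ (Fin n)) (H : Matrix (Fin n) (Fin n) ℝ) :
    gradient (qm x c g H) x = g := by
  apply HasGradientAt.gradient
  rw [hasGradientAt_iff_hasFDerivAt]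
  have h1 : HasFDerivAt (fun y : EuclideanSpace ℝ (Fin n) => ⟪g, y - x⟫)
      (innerSL ℝ g) x := by
    have := ((innerSL ℝ g).hasFDerivAt).comp x ((hasFDerivAt_id x).sub_const x)
    exact this
  have hB := isBoundedBilinearMap_inner (𝕜 := ℝ) (E := EuclideanSpace ℝ (Fin n))
  have hG : HasFDerivAt (fun y : EuclideanSpace ℝ (Fin n) => (y - x, mulVecL H (y - x)))
      (((ContinuousLinearMap.id ℝ _).prod (mulVecL H))) x := by
    have h2 : HasFDerivAt (fun y : EuclideanSpace ℝ (Fin n) => y - x)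
        (ContinuousLinearMap.id ℝ _) x := (hasFDerivAt_id x).sub_const x
    exact h2.prodMk ((mulVecL H).hasFDerivAt.comp x h2)
  have h3 : HasFDerivAt (fun y : EuclideanSpace ℝ (Fin n) => ⟪y - x, mulVecE H (y - x)⟫)
      ((hB.deriv (x - x, mulVecL H (x - x))).comp
        (((ContinuousLinearMap.id ℝ _).prod (mulVecL H)))) x := by
    exact (hB.hasFDerivAt _).comp x hG
  have hzero : ((hB.deriv (x - x, mulVecL H (x - x))).comp
        (((ContinuousLinearMap.id ℝ _).prod (mulVecL H)))) = 0 := by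
    ext v
    simp [IsBoundedBilinearMap.deriv_apply]
  rw [hzero] at h3
  have h4 : HasFDerivAt (qm x c g H) (innerSL ℝ g) x := by
    have hc : HasFDerivAt (fun _ : EuclideanSpace ℝ (Fin n) => c)
        (0 : EuclideanSpace ℝ (Fin n) →L[ℝ] ℝ) x := hasFDerivAt_const c x
    have h5 := (hc.add h1).add (h3.const_mul ((1:ℝ)/2))
    have he : ((0 : EuclideanSpace ℝ (Fin n) →L[ℝ] ℝ) + innerSL ℝ g
        + ((1:ℝ)/2) • (0 : EuclideanSpace ℝ (Fin n) →L[ℝ] ℝ)) = innerSL ℝ g := by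
      ext v; simp
    rw [he] at h5
    exact h5
  have he2 : (InnerProductSpace.toDual ℝ (EuclideanSpace ℝ (Fin n)) g
      : EuclideanSpace ℝ (Fin n) →L[ℝ] ℝ) = innerSL ℝ g := by
    ext v; simp
  rw [he2]
  exact h4


/-- First-order worst-case complexity bound for the IBO trust-region method
(Theorem `thm_wcc_dfo`). -/
theorem ibo_first_order_complexity {n : ℕ}
    (f : EuclideanSpace ℝ (Fin n) → ℝ) (hf : Differentiable ℝ f)
    (flow : ℝ) (hflow : ∀ y, flow ≤ f y)
    (Lg : NNReal) (hLip : LipschitzWith Lg (gradient f))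
    (x : ℕ → EuclideanSpace ℝ (Fin n)) (Δ : ℕ → ℝ) (hΔpos : ∀ k, 0 < Δ k)
    (cm : ℕ → ℝ) (g : ℕ → EuclideanSpace ℝ (Fin n))
    (H : ℕ → Matrix (Fin n) (Fin n) ℝ) (hHsymm : ∀ k, (H k).IsSymm)
    (κH : ℝ) (hκH : 1 ≤ κH) (hHnorm : ∀ k, opNorm (H k) ≤ κH - 1)
    (m : ℕ → EuclideanSpace ℝ (Fin n) → ℝ)
    (hm : ∀ k y, m k y = qm (x k) (cm k) (g k) (H k) y)
    (κmf κmg : ℝ) (hκmf : 0 < κmf) (hκmg : 0 < κmg)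
    (hFL : ∀ k, IsFullyLinear f (m k) (x k) (Δ k) κmf κmg)
    (s : ℕ → EuclideanSpace ℝ (Fin n)) (hs : ∀ k, ‖s k‖ ≤ Δ k)
    (κs : ℝ) (hκs : κs ∈ Set.Ioo (0 : ℝ) (1 / 2))
    (hdec : ∀ k, κs * ‖g k‖ * min (Δ k) (‖g k‖ / (opNorm (H k) + 1)) ≤
      m k (x k) - m k (x k + s k))
    (γdec γinc ηU ηS μc : ℝ)
    (hγdec0 : 0 < γdec) (hγdec1 : γdec < 1) (hγinc : 1 < γinc)
    (hηU : 0 < ηU) (hηUS : ηU ≤ ηS) (hηS : ηS < 1) (hμc : 0 < μc)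
    (ρ : ℕ → ℝ)
    (hρ : ∀ k, ρ k = (f (x k) - f (x k + s k)) / (m k (x k) - m k (x k + s k)))
    (hVS : ∀ k, (ηS ≤ ρ k ∧ μc * Δ k ≤ ‖g k‖) →
      x (k + 1) = x k + s k ∧ Δ (k + 1) = γinc * Δ k)
    (hS : ∀ k, ¬(ηS ≤ ρ k ∧ μc * Δ k ≤ ‖g k‖) → (ηU ≤ ρ k ∧ μc * Δ k ≤ ‖g k‖) →
      x (k + 1) = x k + s k ∧ Δ (k + 1) = Δ k)
    (hU : ∀ k, ¬(ηU ≤ ρ k ∧ μc * Δ k ≤ ‖g k‖) →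
      x (k + 1) = x k ∧ Δ (k + 1) = γdec * Δ k)
    (ε : ℝ) (hε : 0 < ε) (K : ℕ)
    (hgrad : ∀ k < K, ε ≤ ‖gradient f (x k)‖)
    (Δmin : ℝ)
    (hΔmin : Δmin = min (Δ 0)
      (min (γdec * ε / (max (max (2 * κmf / (κs * (1 - ηS))) κH) μc + κmg))
        (ε / ((1 + κmg / μc) * κH)))) :
    (K : ℝ) ≤ Real.log (Δ 0 / Δmin) / Real.log (1 / γdec) +
      (1 + Real.log γinc / Real.log (1 / γdec)) *
        ((1 + κmg / μc) * (f (x 0) - flow) / (ηU * κs * ε * Δmin)) := by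
  classical
  obtain ⟨hκs0, hκs2⟩ := hκs
  have hηS0 : 0 < ηS := lt_of_lt_of_le hηU hηUS
  have h1ηS : 0 < 1 - ηS := by linarith
  set c1 : ℝ := max (max (2 * κmf / (κs * (1 - ηS))) κH) μc with hc1
  have hc1κH : κH ≤ c1 := le_trans (le_max_right _ _) (le_max_left _ _)
  have hc1μc : μc ≤ c1 := le_max_right _ _
  have hc1f : 2 * κmf / (κs * (1 - ηS)) ≤ c1 := le_trans (le_max_left _ _) (le_max_left _ _)
  have hc1pos : 0 < c1 := lt_of_lt_of_le (by linarith) hc1κH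
  have hA : 0 < 1 + κmg / μc := by positivity
  have hΔminpos : 0 < Δmin := by
    rw [hΔmin]
    refine lt_min (hΔpos 0) (lt_min ?_ ?_)
    · apply div_pos (by positivity)
      have : (0:ℝ) < c1 + κmg := by linarith
      simpa [hc1] using this
    · exact div_pos hε (by positivity)
  have hΔminΔ0 : Δmin ≤ Δ 0 := by rw [hΔmin]; exact min_le_left _ _
  have hΔmin2 : Δmin ≤ γdec * ε / (c1 + κmg) := by
    rw [hΔmin]; exact le_trans (min_le_right _ _) (min_le_left _ _)
  have hΔmin3 : Δmin ≤ ε / ((1 + κmg / μc) * κH) := by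
    rw [hΔmin]; exact le_trans (min_le_right _ _) (min_le_right _ _)
  have hgm : ∀ k, gradient (m k) (x k) = g k := by
    intro k
    have hh : m k = qm (x k) (cm k) (g k) (H k) := funext (hm k)
    rw [hh, gradient_qm]
  have hguard : ∀ k, k < K → ε ≤ ‖g k‖ + κmg * Δ k := by
    intro k hk
    have hball : x k ∈ closedBall (x k) (Δ k) := mem_closedBall_self (hΔpos k).le
    have h2 := (hFL k (x k) hball).2
    rw [hgm k] at h2
    have h3 : ‖gradient f (x k)‖ ≤ ‖g k‖ + κmg * Δ k := by
      calc ‖gradient f (x k)‖ = ‖g k - (g k - gradient f (x k))‖ := by rw [sub_sub_cancel]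
        _ ≤ ‖g k‖ + ‖g k - gradient f (x k)‖ := norm_sub_le _ _
        _ ≤ ‖g k‖ + κmg * Δ k := by linarith
    exact le_trans (hgrad k hk) h3
  have hval : ∀ k, |m k (x k) - f (x k)| ≤ κmf * Δ k ^ 2 ∧
      |m k (x k + s k) - f (x k + s k)| ≤ κmf * Δ k ^ 2 := by
    intro k
    refine ⟨(hFL k (x k) (mem_closedBall_self (hΔpos k).le)).1, (hFL k _ ?_).1⟩
    rw [mem_closedBall, dist_eq_norm, add_sub_cancel_left]
    exact hs k
  have hHop : ∀ k, 0 < opNorm (H k) + 1 := fun k => by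
    have := opNorm_nonneg' (H k); linarith
  have hHopκ : ∀ k, opNorm (H k) + 1 ≤ κH := fun k => by have := hHnorm k; linarith
  -- key lemma: small Δ forces very successful step
  have hkey : ∀ k, k < K → Δ k ≤ ε / (c1 + κmg) → ηS ≤ ρ k ∧ μc * Δ k ≤ ‖g k‖ := by
    intro k hk hΔk
    have hΔk0 := hΔpos k
    have hcκ : (0:ℝ) < c1 + κmg := by linarith
    have hateps : (c1 + κmg) * Δ k ≤ ε := by
      rw [le_div_iff₀ hcκ] at hΔk; linarith
    have hgk : c1 * Δ k ≤ ‖g k‖ := by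
      have h := hguard k hk; linarith
    have hgk0 : 0 < ‖g k‖ := lt_of_lt_of_le (mul_pos hc1pos hΔk0) hgk
    have hμ : μc * Δ k ≤ ‖g k‖ :=
      le_trans (mul_le_mul_of_nonneg_right hc1μc hΔk0.le) hgk
    have hminΔ : min (Δ k) (‖g k‖ / (opNorm (H k) + 1)) = Δ k := by
      apply min_eq_left
      rw [le_div_iff₀ (hHop k)]
      calc Δ k * (opNorm (H k) + 1) ≤ Δ k * κH :=
            mul_le_mul_of_nonneg_left (hHopκ k) hΔk0.le
        _ = κH * Δ k := mul_comm _ _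
        _ ≤ c1 * Δ k := mul_le_mul_of_nonneg_right hc1κH hΔk0.le
        _ ≤ ‖g k‖ := hgk
    have hmdec : κs * ‖g k‖ * Δ k ≤ m k (x k) - m k (x k + s k) := by
      have h := hdec k; rw [hminΔ] at h; exact h
    have hmdec0 : 0 < m k (x k) - m k (x k + s k) :=
      lt_of_lt_of_le (by positivity) hmdec
    have hv := hval k
    have h1 := abs_le.1 hv.1
    have h2 := abs_le.1 hv.2
    have hfd : m k (x k) - m k (x k + s k) - 2 * (κmf * Δ k ^ 2) ≤
        f (x k) - f (x k + s k) := by linarith [h1.1, h1.2, h2.1, h2.2]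
    have hstep : 2 * κmf ≤ κs * (1 - ηS) * c1 := by
      rw [div_le_iff₀ (by positivity : (0:ℝ) < κs * (1 - ηS))] at hc1f
      linarith [hc1f]
    have hquad : 2 * (κmf * Δ k ^ 2) ≤ (1 - ηS) * (m k (x k) - m k (x k + s k)) := by
      calc 2 * (κmf * Δ k ^ 2) = (2 * κmf) * Δ k * Δ k := by ring
        _ ≤ (κs * (1 - ηS) * c1) * Δ k * Δ k := by
            have h := mul_le_mul_of_nonneg_right
              (mul_le_mul_of_nonneg_right hstep hΔk0.le) hΔk0.le
            linarith
        _ = (1 - ηS) * (κs * (c1 * Δ k) * Δ k) := by ring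
        _ ≤ (1 - ηS) * (κs * ‖g k‖ * Δ k) := by
            have h := mul_le_mul_of_nonneg_right
              (mul_le_mul_of_nonneg_left hgk hκs0.le) hΔk0.le
            have h2 := mul_le_mul_of_nonneg_left h h1ηS.le
            linarith
        _ ≤ (1 - ηS) * (m k (x k) - m k (x k + s k)) :=
            mul_le_mul_of_nonneg_left hmdec h1ηS.le
    have hρS : ηS ≤ ρ k := by
      rw [hρ k, le_div_iff₀ hmdec0]
      linarith [hfd, hquad]
    exact ⟨hρS, hμ⟩
  set P : ℕ → Prop := fun k => ηU ≤ ρ k ∧ μc * Δ k ≤ ‖g k‖ with hPdef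
  have hstepP : ∀ k, P k → x (k + 1) = x k + s k ∧ Δ k ≤ Δ (k + 1) ∧ Δ (k + 1) ≤ γinc * Δ k := by
    intro k hk
    by_cases hVSk : ηS ≤ ρ k ∧ μc * Δ k ≤ ‖g k‖
    · obtain ⟨h1, h2⟩ := hVS k hVSk
      refine ⟨h1, by
        rw [h2]; exact le_mul_of_one_le_left (hΔpos k).le hγinc.le, le_of_eq h2⟩
    · obtain ⟨h1, h2⟩ := hS k hVSk hk
      refine ⟨h1, le_of_eq h2.symm, by
        rw [h2]; exact le_mul_of_one_le_left (hΔpos k).le hγinc.le⟩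
  have hstepN : ∀ k, ¬ P k → x (k + 1) = x k ∧ Δ (k + 1) = γdec * Δ k := hU
  -- invariant: Δmin ≤ Δ k for k ≤ K
  have hΔlb : ∀ k, k ≤ K → Δmin ≤ Δ k := by
    intro k
    induction k with
    | zero => exact fun _ => hΔminΔ0
    | succ j ih =>
      intro hjK
      have hj : j < K := hjK
      have ihj := ih (le_of_lt hj)
      by_cases hPj : P j
      · exact le_trans ihj (hstepP j hPj).2.1
      · have hUe := (hstepN j hPj).2
        have hΔbig : ε / (c1 + κmg) < Δ j := by
          by_contra hle
          push_neg at hle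
          obtain ⟨ha, hb⟩ := hkey j hj hle
          exact hPj ⟨le_trans hηUS ha, hb⟩
        rw [hUe]
        calc Δmin ≤ γdec * ε / (c1 + κmg) := hΔmin2
          _ = γdec * (ε / (c1 + κmg)) := by rw [mul_div_assoc]
          _ ≤ γdec * Δ j := mul_le_mul_of_nonneg_left hΔbig.le hγdec0.le
  set d : ℝ := ηU * (κs * (ε / (1 + κmg / μc)) * Δmin) with hdd
  have hd0 : 0 < d := by rw [hdd]; positivity
  -- decrease on successful steps
  have hdrop : ∀ k, k < K → P k → f (x (k + 1)) ≤ f (x k) - d := by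
    intro k hk hPk
    have hρk := hPk.1
    have hμk := hPk.2
    have hΔk0 := hΔpos k
    have hgk0 : 0 < ‖g k‖ := lt_of_lt_of_le (mul_pos hμc hΔk0) hμk
    have hgA : ε / (1 + κmg / μc) ≤ ‖g k‖ := by
      have h1 := hguard k hk
      have h2 : Δ k ≤ ‖g k‖ / μc := (le_div_iff₀ hμc).2 (by linarith)
      have h3 : ε ≤ ‖g k‖ * (1 + κmg / μc) := by
        calc ε ≤ ‖g k‖ + κmg * Δ k := h1
          _ ≤ ‖g k‖ + κmg * (‖g k‖ / μc) := by nlinarith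
          _ = ‖g k‖ * (1 + κmg / μc) := by ring
      rw [div_le_iff₀ hA]; linarith
    have hκHpos : (0:ℝ) < κH := by linarith
    have hmin : Δmin ≤ min (Δ k) (‖g k‖ / (opNorm (H k) + 1)) := by
      refine le_min (hΔlb k hk.le) ?_
      calc Δmin ≤ ε / ((1 + κmg / μc) * κH) := hΔmin3
        _ = (ε / (1 + κmg / μc)) / κH := by rw [div_div]
        _ ≤ ‖g k‖ / κH := by gcongr
        _ ≤ ‖g k‖ / (opNorm (H k) + 1) :=
            div_le_div_of_nonneg_left hgk0.le (hHop k) (hHopκ k)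
    have hmdec : κs * (ε / (1 + κmg / μc)) * Δmin ≤ m k (x k) - m k (x k + s k) := by
      refine le_trans ?_ (hdec k)
      have hmin0 : (0:ℝ) ≤ min (Δ k) (‖g k‖ / (opNorm (H k) + 1)) :=
        le_trans hΔminpos.le hmin
      have hεA : (0:ℝ) ≤ ε / (1 + κmg / μc) := by positivity
      calc κs * (ε / (1 + κmg / μc)) * Δmin
          ≤ κs * ‖g k‖ * Δmin := by
            have := mul_le_mul_of_nonneg_left hgA hκs0.le
            exact mul_le_mul_of_nonneg_right this hΔminpos.le
        _ ≤ κs * ‖g k‖ * min (Δ k) (‖g k‖ / (opNorm (H k) + 1)) := by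
            have hg0 : 0 ≤ κs * ‖g k‖ := by positivity
            exact mul_le_mul_of_nonneg_left hmin hg0
    have hmdec0 : 0 < m k (x k) - m k (x k + s k) :=
      lt_of_lt_of_le (by positivity) hmdec
    have hfdiff : ηU * (m k (x k) - m k (x k + s k)) ≤ f (x k) - f (x k + s k) := by
      have hρk2 := hρk
      rw [hρ k, le_div_iff₀ hmdec0] at hρk2
      linarith
    have hx1 : x (k + 1) = x k + s k := (hstepP k hPk).1
    rw [hx1]
    have hdle : d ≤ ηU * (m k (x k) - m k (x k + s k)) := by
      rw [hdd]
      have := mul_le_mul_of_nonneg_left hmdec hηU.le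
      linarith
    linarith
  -- telescoping sum of f decreases
  have hsum : ∀ j, j ≤ K →
      f (x j) ≤ f (x 0) - (((Finset.range j).filter P).card : ℝ) * d := by
    intro j
    induction j with
    | zero => intro _; simp
    | succ i ih =>
      intro hiK
      have hi : i < K := hiK
      have ihi := ih hi.le
      by_cases hPi : P i
      · have h1 := hdrop i hi hPi
        have hcard : ((Finset.range (i + 1)).filter P).card
            = ((Finset.range i).filter P).card + 1 := by
          rw [Finset.range_add_one, Finset.filter_insert, if_pos hPi,
            Finset.card_insert_of_notMem (by simp)]
        rw [hcard]
        push_cast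
        linarith
      · have h1 := (hstepN i hPi).1
        have hcard : ((Finset.range (i + 1)).filter P).card
            = ((Finset.range i).filter P).card := by
          rw [Finset.range_add_one, Finset.filter_insert, if_neg hPi]
        rw [hcard, h1]
        exact ihi
  have hNS : (((Finset.range K).filter P).card : ℝ) * d ≤ f (x 0) - flow := by
    have h1 := hsum K le_rfl
    have h2 := hflow (x K)
    linarith
  -- log recursion for Δ
  have hlog : ∀ j, j ≤ K → Real.log (Δ j) ≤ Real.log (Δ 0)
      + (((Finset.range j).filter P).card : ℝ) * Real.log γinc
      + (((Finset.range j).filter (fun k => ¬ P k)).card : ℝ) * Real.log γdec := by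
    intro j
    induction j with
    | zero => intro _; simp
    | succ i ih =>
      intro hiK
      have hi : i < K := hiK
      have ihi := ih hi.le
      by_cases hPi : P i
      · have h1 : Δ (i + 1) ≤ γinc * Δ i := (hstepP i hPi).2.2
        have h2 : Real.log (Δ (i + 1)) ≤ Real.log γinc + Real.log (Δ i) := by
          calc Real.log (Δ (i + 1)) ≤ Real.log (γinc * Δ i) :=
                Real.log_le_log (hΔpos _) h1
            _ = Real.log γinc + Real.log (Δ i) :=
                Real.log_mul (by linarith) (hΔpos i).ne'
        have hcard1 : ((Finset.range (i + 1)).filter P).card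
            = ((Finset.range i).filter P).card + 1 := by
          rw [Finset.range_add_one, Finset.filter_insert, if_pos hPi,
            Finset.card_insert_of_notMem (by simp)]
        have hcard2 : ((Finset.range (i + 1)).filter (fun k => ¬ P k)).card
            = ((Finset.range i).filter (fun k => ¬ P k)).card := by
          rw [Finset.range_add_one, Finset.filter_insert, if_neg (not_not_intro hPi)]
        rw [hcard1, hcard2]
        push_cast
        linarith
      · have h1 : Δ (i + 1) = γdec * Δ i := (hstepN i hPi).2
        have h2 : Real.log (Δ (i + 1)) = Real.log γdec + Real.log (Δ i) := by
          rw [h1, Real.log_mul hγdec0.ne' (hΔpos i).ne']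
        have hcard1 : ((Finset.range (i + 1)).filter P).card
            = ((Finset.range i).filter P).card := by
          rw [Finset.range_add_one, Finset.filter_insert, if_neg hPi]
        have hcard2 : ((Finset.range (i + 1)).filter (fun k => ¬ P k)).card
            = ((Finset.range i).filter (fun k => ¬ P k)).card + 1 := by
          rw [Finset.range_add_one, Finset.filter_insert, if_pos hPi,
            Finset.card_insert_of_notMem (by simp)]
        rw [hcard1, hcard2]
        push_cast
        linarith
  set NS := ((Finset.range K).filter P).card with hNSdef
  set NU := ((Finset.range K).filter (fun k => ¬ P k)).card with hNUdef
  have hcards : NS + NU = K := by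
    rw [hNSdef, hNUdef, Finset.card_filter_add_card_filter_not, Finset.card_range]
  have hlogK := hlog K le_rfl
  have hlmin : Real.log Δmin ≤ Real.log (Δ K) :=
    Real.log_le_log hΔminpos (hΔlb K le_rfl)
  have hLγpos : 0 < Real.log (1 / γdec) :=
    Real.log_pos (one_lt_one_div hγdec0 hγdec1)
  have hLγeq : Real.log (1 / γdec) = - Real.log γdec := by rw [one_div, Real.log_inv]
  have hlgi : 0 ≤ Real.log γinc := Real.log_nonneg hγinc.le
  have hNU2 : (NU : ℝ) * Real.log (1 / γdec)
      ≤ Real.log (Δ 0 / Δmin) + (NS : ℝ) * Real.log γinc := by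
    rw [Real.log_div (hΔpos 0).ne' hΔminpos.ne', hLγeq]
    linarith
  have hNSle : (NS : ℝ) ≤ (1 + κmg / μc) * (f (x 0) - flow) / (ηU * κs * ε * Δmin) := by
    have h1 : (NS : ℝ) ≤ (f (x 0) - flow) / d := (le_div_iff₀ hd0).2 hNS
    have h2 : (f (x 0) - flow) / d
        = (1 + κmg / μc) * (f (x 0) - flow) / (ηU * κs * ε * Δmin) := by
      rw [hdd]
      rw [div_eq_div_iff hd0.ne' (by positivity : (0:ℝ) < ηU * κs * ε * Δmin).ne']
      have hAe2 : (1 + κmg / μc)⁻¹ * (1 + κmg / μc) = 1 := inv_mul_cancel₀ hA.ne'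
      linear_combination (-((f (x 0) - flow) * (ηU * κs * ε * Δmin))) * hAe2
    rw [h2] at h1
    exact h1
  have hfac : 0 ≤ 1 + Real.log γinc / Real.log (1 / γdec) := by
    have := div_nonneg hlgi hLγpos.le
    linarith
  have hKr : (K : ℝ) = (NS : ℝ) + (NU : ℝ) := by
    rw [← hcards]; push_cast; ring
  have hNUle : (NU : ℝ) ≤ (Real.log (Δ 0 / Δmin) + (NS : ℝ) * Real.log γinc)
      / Real.log (1 / γdec) := (le_div_iff₀ hLγpos).2 hNU2
  have hexp : (Real.log (Δ 0 / Δmin) + (NS : ℝ) * Real.log γinc) / Real.log (1 / γdec)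
      = Real.log (Δ 0 / Δmin) / Real.log (1 / γdec)
        + (NS : ℝ) * (Real.log γinc / Real.log (1 / γdec)) := by
    rw [add_div, mul_div_assoc]
  rw [hexp] at hNUle
  have hmul2 : (NS : ℝ) * (Real.log γinc / Real.log (1 / γdec)) + (NS : ℝ)
      ≤ (1 + Real.log γinc / Real.log (1 / γdec))
        * ((1 + κmg / μc) * (f (x 0) - flow) / (ηU * κs * ε * Δmin)) := by
    have h := mul_le_mul_of_nonneg_left hNSle hfac
    have hexp2 : (1 + Real.log γinc / Real.log (1 / γdec)) * (NS:ℝ)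
        = (NS : ℝ) * (Real.log γinc / Real.log (1 / γdec)) + (NS : ℝ) := by ring
    linarith [hexp2 ▸ h]
  rw [hKr]
  linarith
end
end
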